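/- Let Q be the simplicial set Δ^0 ⊔_{Δ^{\{0,2\}}} Δ^3 ⊔_{Δ^{\{1,3\}}} Δ^0, obtained from Δ^3 by collapsing the edge from 0 to 2 and the edge from 1 to 3 each to a point. Then the homotopy category τ(Q) of Q (the left adjoint of the nerve applied to Q) is a groupoid; equivalently, for every small category C and every map of simplicial sets Q → N(C), every 1-simplex of Q is sent to an isomorphism of C. -/

import Mathlib

open CategoryTheory Simplicial SSet Limits

/-- The map `Δ[1] ⟶ Δ[0]`. -/
noncomputable def collapseMap : (Δ[1] : SSet) ⟶ Δ[0] :=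
  SSet.stdSimplex.map (SimplexCategory.mkOfLe (0 : Fin 1) 0 le_rfl)

/-- The edge of `Δ[3]` from `0` to `2`. -/
noncomputable def edge02 : (Δ[1] : SSet) ⟶ Δ[3] :=
  SSet.stdSimplex.map (SimplexCategory.mkOfLe (0 : Fin 4) 2 (by decide))

/-- The edge of `Δ[3]` from `1` to `3`. -/
noncomputable def edge13 : (Δ[1] : SSet) ⟶ Δ[3] :=
  SSet.stdSimplex.map (SimplexCategory.mkOfLe (1 : Fin 4) 3 (by decide))

/-- The simplicial set `Q = Δ⁰ ⊔_{Δ^{0,2}} Δ³ ⊔_{Δ^{1,3}} Δ⁰`, obtained from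
`Δ³` by collapsing the edge from `0` to `2` and the edge from `1` to `3` each
to a point. -/
noncomputable def Q : SSet :=
  pushout (coprod.desc edge02 edge13) (coprod.map collapseMap collapseMap)

section Aux

/-- Elements of a pushout of simplicial sets are jointly covered by the two inclusions. -/
lemma pushout_js {X Y Z : SSet.{0}} (f : X ⟶ Y) (g : X ⟶ Z) (n : SimplexCategoryᵒᵖ)
    (q : (pushout f g).obj n) :
    (∃ y : Y.obj n, (pushout.inl f g).app n y = q) ∨ (∃ z : Z.obj n, (pushout.inr f g).app n z = q) := by
  obtain ⟨j, y, hy⟩ := Types.jointly_surjective _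
    (isColimitOfPreserves ((evaluation SimplexCategoryᵒᵖ (Type _)).obj n)
      (colimit.isColimit (span f g))) q
  cases j with
  | none =>
    left
    refine ⟨f.app n y, ?_⟩
    rw [← hy]
    exact (ConcreteCategory.congr_hom (NatTrans.congr_app (colimit.w (span f g) WalkingSpan.Hom.fst) n) y)
  | some j =>
    cases j with
    | left => exact Or.inl ⟨y, hy⟩
    | right => exact Or.inr ⟨y, hy⟩

/-- Elements of a coproduct of simplicial sets are jointly covered by the two inclusions. -/
lemma coprod_js {X Y : SSet} (n : SimplexCategoryᵒᵖ) (q : (X ⨿ Y).obj n) :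
    (∃ y, (coprod.inl : X ⟶ X ⨿ Y).app n y = q) ∨
      (∃ z, (coprod.inr : Y ⟶ X ⨿ Y).app n z = q) := by
  obtain ⟨j, y, hy⟩ := Types.jointly_surjective _
    (isColimitOfPreserves ((evaluation SimplexCategoryᵒᵖ (Type _)).obj n)
      (colimit.isColimit (pair X Y))) q
  obtain ⟨j⟩ := j
  cases j with
  | left => exact Or.inl ⟨y, hy⟩
  | right => exact Or.inr ⟨y, hy⟩

/-- A map from a standard simplex is determined by the image of the generator. -/
lemma natApp {n : ℕ} (X : SSet) (G : Δ[n] ⟶ X) (m : SimplexCategoryᵒᵖ) (x : Δ[n].obj m) :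
    G.app m x = X.map (stdSimplex.objEquiv x).op (G.app _ ((SSet.yonedaEquiv (𝟙 Δ[n])))) := by
  rw [stdSimplex.map_objEquiv_op_apply, ← yonedaEquiv_symm_comp, Equiv.symm_apply_apply,
    Category.id_comp]

variable {C : Type} [SmallCategory C]

/-- Every map of a `ComposableArrows` is an iso. -/
def AllIso {n : ℕ} (S : ComposableArrows C n) : Prop :=
  ∀ ⦃a b : Fin (n + 1)⦄ (φ : a ⟶ b), IsIso (S.map φ)

lemma allIso_zero (P : ComposableArrows C 0) : AllIso P := by
  intro a b φ
  obtain rfl : a = b := Fin.ext (by omega)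
  obtain rfl : φ = 𝟙 a := Subsingleton.elim _ _
  rw [P.map_id]; infer_instance

lemma allIso_map {m n : SimplexCategory} (f : m ⟶ n) (S : (nerve C).obj (Opposite.op n))
    (hS : AllIso S) : AllIso ((nerve C).map f.op S) := by
  intro a b φ
  show IsIso (S.map ((SimplexCategory.toCat.map f).toFunctor.map φ))
  exact hS _

lemma allIso_three (S : ComposableArrows C 3) (h02 : IsIso (S.map' 0 2))
    (h13 : IsIso (S.map' 1 3)) : AllIso S := by
  have c02 : S.map' 0 2 = S.map' 0 1 ≫ S.map' 1 2 := S.map'_comp 0 1 2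
  have c13 : S.map' 1 3 = S.map' 1 2 ≫ S.map' 2 3 := S.map'_comp 1 2 3
  set g1 := S.map' 0 1 with hg1
  set g2 := S.map' 1 2 with hg2
  set g3 := S.map' 2 3 with hg3
  have h02' : IsIso (S.map' 0 2) := h02
  have h13' : IsIso (S.map' 1 3) := h13
  rw [c02] at h02
  rw [c13] at h13
  have hiso2 : IsIso g2 := by
    refine ⟨g3 ≫ inv (g2 ≫ g3), ?_, ?_⟩
    · rw [← Category.assoc, IsIso.hom_inv_id]
    · have ha : (inv (g1 ≫ g2) ≫ g1) ≫ g2 = 𝟙 _ := by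
        rw [Category.assoc, IsIso.inv_hom_id]
      calc (g3 ≫ inv (g2 ≫ g3)) ≫ g2
          = ((inv (g1 ≫ g2) ≫ g1) ≫ g2) ≫ (g3 ≫ inv (g2 ≫ g3)) ≫ g2 := by
            rw [ha, Category.id_comp]
        _ = (inv (g1 ≫ g2) ≫ g1) ≫ ((g2 ≫ g3) ≫ inv (g2 ≫ g3)) ≫ g2 := by
            simp only [Category.assoc]
        _ = (inv (g1 ≫ g2) ≫ g1) ≫ g2 := by rw [IsIso.hom_inv_id, Category.id_comp]
        _ = 𝟙 _ := ha
  have hiso1 : IsIso g1 := by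
    have : g1 = (g1 ≫ g2) ≫ inv g2 := by rw [Category.assoc, IsIso.hom_inv_id, Category.comp_id]
    rw [this]; infer_instance
  have hiso3 : IsIso g3 := by
    have : g3 = inv g2 ≫ (g2 ≫ g3) := by rw [← Category.assoc, IsIso.inv_hom_id, Category.id_comp]
    rw [this]; infer_instance
  have key : ∀ (i j : ℕ) (hij : i ≤ j) (hj : j ≤ 3), IsIso (S.map' i j hij hj) := by
    intro i j hij hj
    have hi3 : i ≤ 3 := le_trans hij hj
    interval_cases i <;> interval_cases j
    · rw [S.map'_self 0]; infer_instance
    · exact hiso1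
    · exact h02'
    · haveI := h02'; haveI := hiso3; rw [S.map'_comp 0 2 3]; infer_instance
    · rw [S.map'_self 1]; infer_instance
    · exact hiso2
    · exact h13'
    · rw [S.map'_self 2]; infer_instance
    · exact hiso3
    · rw [S.map'_self 3]; infer_instance
  intro a b φ
  have hab : a ≤ b := leOfHom φ
  have e : S.map φ = S.map' a.1 b.1 hab (by omega) := congrArg S.map (Subsingleton.elim _ _)
  rw [e]
  exact key _ _ _ _

end Aux

/-- The homotopy category of `Q` is a groupoid: for every small category `C`
and every simplicial map `Q ⟶ N(C)`, every 1-simplex of `Q` is sent to an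
isomorphism of `C`. -/
theorem statement8 (C : Type) [SmallCategory C] (F : Q ⟶ nerve C)
    (q : Q.obj (Opposite.op (SimplexCategory.mk 1))) :
    IsIso ((F.app (Opposite.op (SimplexCategory.mk 1)) q).map' 0 1
      (by omega) (by exact le_rfl)) := by
  set f := coprod.desc edge02 edge13 with hf
  set g := coprod.map collapseMap collapseMap with hg
  let GG : (Δ[3] : SSet) ⟶ nerve C := pushout.inl f g ≫ F
  let HL : (Δ[0] : SSet) ⟶ nerve C := coprod.inl ≫ pushout.inr f g ≫ F
  let HR : (Δ[0] : SSet) ⟶ nerve C := coprod.inr ≫ pushout.inr f g ≫ F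
  let S : ComposableArrows C 3 := GG.app _ ((SSet.yonedaEquiv.{0} (𝟙 Δ[3])))
  let PL : ComposableArrows C 0 := HL.app _ ((SSet.yonedaEquiv.{0} (𝟙 Δ[0])))
  let PR : ComposableArrows C 0 := HR.app _ ((SSet.yonedaEquiv.{0} (𝟙 Δ[0])))
  -- the two edge conditions
  have cond02 : edge02 ≫ pushout.inl f g = (collapseMap ≫ coprod.inl) ≫ pushout.inr f g := by
    calc edge02 ≫ pushout.inl f g
        = coprod.inl ≫ (f ≫ pushout.inl f g) := by
          rw [← Category.assoc, hf, coprod.inl_desc]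
      _ = coprod.inl ≫ (g ≫ pushout.inr f g) := by rw [pushout.condition]
      _ = (collapseMap ≫ coprod.inl) ≫ pushout.inr f g := by
          rw [← Category.assoc, hg, coprod.inl_map, Category.assoc]
  have cond13 : edge13 ≫ pushout.inl f g = (collapseMap ≫ coprod.inr) ≫ pushout.inr f g := by
    calc edge13 ≫ pushout.inl f g
        = coprod.inr ≫ (f ≫ pushout.inl f g) := by
          rw [← Category.assoc, hf, coprod.inr_desc]
      _ = coprod.inr ≫ (g ≫ pushout.inr f g) := by rw [pushout.condition]
      _ = (collapseMap ≫ coprod.inr) ≫ pushout.inr f g := by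
          rw [← Category.assoc, hg, coprod.inr_map, Category.assoc]
  have e02 : (nerve C).map (SimplexCategory.mkOfLe (0 : Fin 4) 2 (by decide)).op S
      = (nerve C).map (stdSimplex.objEquiv
          (collapseMap.app _ ((SSet.yonedaEquiv.{0} (𝟙 Δ[1]))))).op PL := by
    have h1 : GG.app _ (edge02.app _ ((SSet.yonedaEquiv.{0} (𝟙 Δ[1]))))
        = (nerve C).map (stdSimplex.objEquiv
            (edge02.app _ ((SSet.yonedaEquiv.{0} (𝟙 Δ[1]))))).op S := natApp _ GG _ _
    have h2 : HL.app _ (collapseMap.app _ ((SSet.yonedaEquiv.{0} (𝟙 Δ[1]))))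
        = (nerve C).map (stdSimplex.objEquiv
            (collapseMap.app _ ((SSet.yonedaEquiv.{0} (𝟙 Δ[1]))))).op PL := natApp _ HL _ _
    have h3 : stdSimplex.objEquiv (edge02.app _ ((SSet.yonedaEquiv.{0} (𝟙 Δ[1]))))
        = SimplexCategory.mkOfLe (0 : Fin 4) 2 (by decide) := by
      rfl
    have h4 : GG.app _ (edge02.app _ ((SSet.yonedaEquiv.{0} (𝟙 Δ[1]))))
        = HL.app _ (collapseMap.app _ ((SSet.yonedaEquiv.{0} (𝟙 Δ[1])))) := by
      have := ConcreteCategory.congr_hom (NatTrans.congr_app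
        (congrArg (· ≫ F) cond02) (Opposite.op (SimplexCategory.mk 1)))
        ((SSet.yonedaEquiv.{0} (𝟙 Δ[1])))
      exact this
    rw [← h3, ← h1, h4, h2]
  have e13 : (nerve C).map (SimplexCategory.mkOfLe (1 : Fin 4) 3 (by decide)).op S
      = (nerve C).map (stdSimplex.objEquiv
          (collapseMap.app _ ((SSet.yonedaEquiv.{0} (𝟙 Δ[1]))))).op PR := by
    have h1 : GG.app _ (edge13.app _ ((SSet.yonedaEquiv.{0} (𝟙 Δ[1]))))
        = (nerve C).map (stdSimplex.objEquiv
            (edge13.app _ ((SSet.yonedaEquiv.{0} (𝟙 Δ[1]))))).op S := natApp _ GG _ _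
    have h2 : HR.app _ (collapseMap.app _ ((SSet.yonedaEquiv.{0} (𝟙 Δ[1]))))
        = (nerve C).map (stdSimplex.objEquiv
            (collapseMap.app _ ((SSet.yonedaEquiv.{0} (𝟙 Δ[1]))))).op PR := natApp _ HR _ _
    have h3 : stdSimplex.objEquiv (edge13.app _ ((SSet.yonedaEquiv.{0} (𝟙 Δ[1]))))
        = SimplexCategory.mkOfLe (1 : Fin 4) 3 (by decide) := by
      rfl
    have h4 : GG.app _ (edge13.app _ ((SSet.yonedaEquiv.{0} (𝟙 Δ[1]))))
        = HR.app _ (collapseMap.app _ ((SSet.yonedaEquiv.{0} (𝟙 Δ[1])))) := by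
      have := ConcreteCategory.congr_hom (NatTrans.congr_app
        (congrArg (· ≫ F) cond13) (Opposite.op (SimplexCategory.mk 1)))
        ((SSet.yonedaEquiv.{0} (𝟙 Δ[1])))
      exact this
    rw [← h3, ← h1, h4, h2]
  have h02 : IsIso (S.map' 0 2) := by
    show IsIso (((nerve C).map
      (SimplexCategory.mkOfLe (0 : Fin 4) 2 (by decide)).op S).map' 0 1)
    rw [e02]
    exact allIso_map (stdSimplex.objEquiv (collapseMap.app _ ((SSet.yonedaEquiv.{0} (𝟙 Δ[1]))))) PL (allIso_zero PL) _
  have h13 : IsIso (S.map' 1 3) := by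
    show IsIso (((nerve C).map
      (SimplexCategory.mkOfLe (1 : Fin 4) 3 (by decide)).op S).map' 0 1)
    rw [e13]
    exact allIso_map (stdSimplex.objEquiv (collapseMap.app _ ((SSet.yonedaEquiv.{0} (𝟙 Δ[1]))))) PR (allIso_zero PR) _
  have hAll : AllIso S := allIso_three S h02 h13
  obtain ⟨x, rfl⟩ | ⟨y, rfl⟩ := pushout_js f g _ q
  · have hx : F.app _ ((pushout.inl f g).app _ x)
        = (nerve C).map (stdSimplex.objEquiv x).op S := natApp _ GG _ x
    rw [hx]
    exact allIso_map (stdSimplex.objEquiv x) S hAll _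
  · obtain ⟨z, rfl⟩ | ⟨z, rfl⟩ := coprod_js _ y
    · have hz : F.app _ ((pushout.inr f g).app _ ((coprod.inl : (Δ[0]:SSet) ⟶ Δ[0] ⨿ Δ[0]).app _ z))
          = (nerve C).map (stdSimplex.objEquiv z).op PL := natApp _ HL _ z
      rw [hz]
      exact allIso_map (stdSimplex.objEquiv z) PL (allIso_zero PL) _
    · have hz : F.app _ ((pushout.inr f g).app _ ((coprod.inr : (Δ[0]:SSet) ⟶ Δ[0] ⨿ Δ[0]).app _ z))
          = (nerve C).map (stdSimplex.objEquiv z).op PR := natApp _ HR _ z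
      rw [hz]
      exact allIso_map (stdSimplex.objEquiv z) PR (allIso_zero PR) _
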